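/- For every integer k ≥ 166: φ(1 − 2^{-k}) > 2^{k-1}·ln 2 − (ln 2)/2 − 1/2 − k^2·2^{-k}, where φ(α) = (ln 2 − h(α)) · (2^{k-1} + (2^{k-1} − 2)·k·(1−α) − 1/2) and h(α) = −α·ln α − (1−α)·ln(1−α). -/

import Mathlib

/-- The entropy function `h(α) = -α ln α - (1-α) ln(1-α)` (note `Real.log 0 = 0`,
so the convention `0 · ln 0 = 0` holds automatically). -/
noncomputable def entH (α : ℝ) : ℝ :=
  -α * Real.log α - (1 - α) * Real.log (1 - α)

/-- `φ(α) = (ln 2 - h(α)) (2^(k-1) + (2^(k-1) - 2) k (1-α) - 1/2)`. -/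
noncomputable def phiAM (k : ℕ) (α : ℝ) : ℝ :=
  (Real.log 2 - entH α) * (2 ^ (k - 1) + ((2 : ℝ) ^ (k - 1) - 2) * k * (1 - α) - 1 / 2)

/-- Key inequality, abstracted over `ε = 2^(-k)` and `P = 2^(k-1)`. -/
lemma key_ineq (k : ℕ) (hk : 166 ≤ k) (ε P : ℝ) (hε : 0 < ε) (hεP : ε * P = 1/2)
    (hkP : (k:ℝ) ≤ P) (hlogε : Real.log ε = -(k:ℝ) * Real.log 2) (hε2 : ε ≤ 1/2) :
    (Real.log 2 - entH (1 - ε)) * (P + (P - 2) * (k:ℝ) * ε - 1/2)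
      > P * Real.log 2 - Real.log 2 / 2 - 1/2 - (k:ℝ)^2 * ε := by
  have hl1 : (0.6931 : ℝ) < Real.log 2 := lt_trans (by norm_num) Real.log_two_gt_d9
  have hl2 : Real.log 2 < 0.6932 := lt_of_lt_of_le Real.log_two_lt_d9 (by norm_num)
  have hk166 : (166:ℝ) ≤ (k:ℝ) := by exact_mod_cast hk
  have h1ε : (0:ℝ) < 1 - ε := by linarith
  have hkε : (k:ℝ) * ε ≤ 1/2 := by nlinarith
  -- (1-ε) log(1-ε) ≥ -ε
  have hloginv := Real.log_le_sub_one_of_pos (show (0:ℝ) < (1-ε)⁻¹ by positivity)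
  rw [Real.log_inv] at hloginv
  have hinv : (1-ε) * (1-ε)⁻¹ = 1 := mul_inv_cancel₀ h1ε.ne'
  have hlog1ε : -ε ≤ (1-ε) * Real.log (1-ε) := by
    nlinarith [mul_le_mul_of_nonneg_left hloginv h1ε.le]
  -- lower bound on log 2 - entH (1-ε)
  have hL : Real.log 2 - (k:ℝ) * ε * Real.log 2 - ε ≤ Real.log 2 - entH (1-ε) := by
    unfold entH
    rw [show (1:ℝ) - (1-ε) = ε by ring, hlogε]
    nlinarith [hlog1ε]
  -- multiplier is positive
  have hM : (0:ℝ) < P + (P - 2) * (k:ℝ) * ε - 1/2 := by nlinarith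
  have step : (Real.log 2 - (k:ℝ) * ε * Real.log 2 - ε) * (P + (P - 2) * (k:ℝ) * ε - 1/2)
      ≤ (Real.log 2 - entH (1-ε)) * (P + (P - 2) * (k:ℝ) * ε - 1/2) :=
    mul_le_mul_of_nonneg_right hL hM.le
  refine lt_of_lt_of_le ?_ step
  have expand : (Real.log 2 - (k:ℝ) * ε * Real.log 2 - ε) * (P + (P - 2) * (k:ℝ) * ε - 1/2)
      = P * Real.log 2 - Real.log 2 / 2 - 1/2
        + ε * (1/2 - 2*(k:ℝ)*Real.log 2 - (k:ℝ)^2*Real.log 2/2 + (k:ℝ)*Real.log 2/2 - (k:ℝ)/2)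
        + ε^2 * (2*(k:ℝ)^2*Real.log 2 + 2*(k:ℝ)) := by
    linear_combination (-(k:ℝ)^2*ε*Real.log 2 - 1 - (k:ℝ)*ε) * hεP
  rw [expand]
  have hC : (0:ℝ) < 1/2 - 2*(k:ℝ)*Real.log 2 - (k:ℝ)^2*Real.log 2/2 + (k:ℝ)*Real.log 2/2 - (k:ℝ)/2 + (k:ℝ)^2 := by
    nlinarith
  have hD : (0:ℝ) ≤ ε^2 * (2*(k:ℝ)^2*Real.log 2 + 2*(k:ℝ)) := by positivity
  nlinarith [mul_pos hε hC]

/-- For every `k ≥ 166`: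
`φ(1 - 2^(-k)) > 2^(k-1) ln 2 - (ln 2)/2 - 1/2 - k² 2^(-k)`. -/
theorem phiAM_at_one_sub_two_pow (k : ℕ) (hk : 166 ≤ k) :
    phiAM k (1 - (2 : ℝ) ^ (-(k : ℤ))) >
      2 ^ (k - 1) * Real.log 2 - Real.log 2 / 2 - 1 / 2
        - (k : ℝ) ^ 2 * (2 : ℝ) ^ (-(k : ℤ)) := by
  have hk1 : 1 ≤ k := by omega
  set ε : ℝ := (2:ℝ) ^ (-(k:ℤ)) with hεdef
  set P : ℝ := (2:ℝ) ^ (k-1) with hPdef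
  have hε : 0 < ε := by rw [hεdef]; positivity
  have hεP : ε * P = 1/2 := by
    rw [hεdef, hPdef, ← zpow_natCast (2:ℝ) (k-1), ← zpow_add₀ (two_ne_zero : (2:ℝ) ≠ 0)]
    rw [show -(k:ℤ) + ((k-1:ℕ):ℤ) = -1 by omega]
    norm_num
  have hkP : (k:ℝ) ≤ P := by
    have h := Nat.lt_two_pow_self (n := k-1)
    have : k ≤ 2^(k-1) := by omega
    rw [hPdef]
    exact_mod_cast this
  have hlogε : Real.log ε = -(k:ℝ) * Real.log 2 := by
    rw [hεdef, Real.log_zpow]; push_cast; ring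
  have hε2 : ε ≤ 1/2 := by
    have hP1 : (1:ℝ) ≤ P := by linarith [hkP, (show (166:ℝ) ≤ (k:ℝ) by exact_mod_cast hk)]
    nlinarith
  have h := key_ineq k hk ε P hε hεP hkP hlogε hε2
  calc phiAM k (1 - ε) = (Real.log 2 - entH (1 - ε)) * (P + (P - 2) * (k:ℝ) * ε - 1/2) := by
        unfold phiAM; rw [← hPdef]; ring
    _ > P * Real.log 2 - Real.log 2 / 2 - 1/2 - (k:ℝ)^2 * ε := h
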